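/- Let H be an Hadamard manifold (complete, simply connected Riemannian manifold of nonpositive sectional curvature) of dimension n with distance function d, fix x₀ ∈ H, and let S be the unit tangent sphere at x₀. Define p : H \ {x₀} → S × (0, +∞) by p(x) = (γ'_x(0), d(x₀, x)), where γ_x is the unique unit-speed geodesic from x₀ through x. Then p is continuous, and the teardrop H ∪_p S (with S replacing the role of Y and (0,+∞) replacing ℝ) is homeomorphic to the closed unit ball in the tangent space at x₀; in particular H ∪_p S is an n-cell. -/

import Mathlib

open Topology Set Metric Filter

/-- The teardrop topology on `H ⊔ S` for a map `p` defined only on the open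
subset `H \ {x₀}` (the variation of the teardrop construction where `p` is
defined on an open subset): the minimal topology in which every open set of
`H` is open and the collapse map (defined on `(H \ {x₀}) ⊔ S`, sending
`x ↦ p x` and `s ↦ (s, +∞)`) is continuous. -/
def pointedTeardropTop {H S : Type*} [TopologicalSpace H] [TopologicalSpace S]
    (x₀ : H) (p : {x : H // x ≠ x₀} → S × ℝ) : TopologicalSpace (H ⊕ S) :=
  TopologicalSpace.generateFrom
    ({T | ∃ U : Set H, IsOpen U ∧ T = Sum.inl '' U} ∪
     {T | ∃ V : Set (S × EReal), IsOpen V ∧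
        T = {w : H ⊕ S | Sum.elim
              (fun x => ∃ hx : x ≠ x₀,
                ((p ⟨x, hx⟩).1, ((p ⟨x, hx⟩).2 : EReal)) ∈ V)
              (fun s => ((s, ⊤) : S × EReal) ∈ V) w}})

section TeardropAux

variable {F : Type*} [NormedAddCommGroup F] [NormedSpace ℝ F]
variable {H : Type*} [MetricSpace H]

lemma td_aux1 (w : F) : ‖(1 + ‖w‖)⁻¹ • w‖ = ‖w‖ / (1 + ‖w‖) := by
  rw [norm_smul, norm_inv, Real.norm_eq_abs,
    abs_of_pos (by positivity : (0:ℝ) < 1 + ‖w‖), div_eq_inv_mul]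

lemma td_aux1' (w : F) : ‖(1 + ‖w‖)⁻¹ • w‖ < 1 := by
  rw [td_aux1, div_lt_one (by positivity)]; linarith [norm_nonneg w]

lemma td_aux2 (w : F) : (1 - ‖(1 + ‖w‖)⁻¹ • w‖)⁻¹ • ((1 + ‖w‖)⁻¹ • w) = w := by
  have h : (0:ℝ) < 1 + ‖w‖ := by positivity
  rw [td_aux1]
  have h2 : 1 - ‖w‖ / (1 + ‖w‖) = (1 + ‖w‖)⁻¹ := by field_simp; ring
  rw [h2, inv_inv, smul_smul, mul_inv_cancel₀ h.ne', one_smul]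

lemma td_aux3 (v : F) (hv : ‖v‖ < 1) :
    (1 + ‖(1 - ‖v‖)⁻¹ • v‖)⁻¹ • ((1 - ‖v‖)⁻¹ • v) = v := by
  have h : (0:ℝ) < 1 - ‖v‖ := by linarith
  have hn : ‖(1 - ‖v‖)⁻¹ • v‖ = ‖v‖ / (1 - ‖v‖) := by
    rw [norm_smul, norm_inv, Real.norm_eq_abs, abs_of_pos h, div_eq_inv_mul]
  rw [hn]
  have h2 : (1 + ‖v‖ / (1 - ‖v‖))⁻¹ = 1 - ‖v‖ := by
    rw [show 1 + ‖v‖ / (1 - ‖v‖) = (1 - ‖v‖)⁻¹ by field_simp; ring, inv_inv]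
  rw [h2, smul_smul, mul_inv_cancel₀ h.ne', one_smul]

/-- the unit-direction of the collapsed point -/
lemma td_aux4 (w : F) (hw : w ≠ 0) :
    ‖(1 + ‖w‖)⁻¹ • w‖⁻¹ • ((1 + ‖w‖)⁻¹ • w) = ‖w‖⁻¹ • w := by
  have h : (0:ℝ) < 1 + ‖w‖ := by positivity
  have hnw : ‖w‖ ≠ 0 := norm_ne_zero_iff.mpr hw
  rw [td_aux1, smul_smul]
  congr 1
  field_simp

noncomputable def tdEquiv (expH : F ≃ₜ H) :
    (H ⊕ ↥(sphere (0:F) 1)) ≃ ↥(closedBall (0:F) 1) where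
  toFun := Sum.elim
    (fun x => ⟨(1 + ‖expH.symm x‖)⁻¹ • expH.symm x, by
      rw [mem_closedBall_zero_iff]; exact (td_aux1' _).le⟩)
    (fun s => ⟨s, by
      rw [mem_closedBall_zero_iff, mem_sphere_zero_iff_norm.mp s.2]⟩)
  invFun := fun v =>
    if h : ‖(v:F)‖ = 1 then Sum.inr ⟨v, mem_sphere_zero_iff_norm.mpr h⟩
    else Sum.inl (expH ((1 - ‖(v:F)‖)⁻¹ • (v:F)))
  left_inv := by
    rintro (x | s)
    · simp only [Sum.elim_inl]
      refine (dif_neg (by exact (td_aux1' (expH.symm x)).ne)).trans ?_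
      rw [td_aux2, Homeomorph.apply_symm_apply]
    · simp only [Sum.elim_inr]
      exact dif_pos (mem_sphere_zero_iff_norm.mp s.2)
  right_inv := by
    rintro ⟨v, hv⟩
    rw [mem_closedBall_zero_iff] at hv
    simp only
    by_cases h : ‖v‖ = 1
    · rw [dif_pos h]
      rfl
    · rw [dif_neg h]
      simp only [Sum.elim_inl]
      ext
      simp only
      rw [Homeomorph.symm_apply_apply, td_aux3 v (lt_of_le_of_ne hv h)]


/-- radius reparametrization `[0,1] → [0,∞]`. -/
noncomputable def tdRad (t : ℝ) : EReal :=
  if t = 1 then ⊤ else ((t / (1 - t) : ℝ) : EReal)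

lemma tdRad_of_ne {t : ℝ} (h : t ≠ 1) : tdRad t = ((t / (1 - t) : ℝ) : EReal) :=
  if_neg h

lemma tdRad_one : tdRad 1 = ⊤ := if_pos rfl

lemma tdRad_continuousOn : ContinuousOn tdRad (Iic (1:ℝ)) := by
  intro t ht
  rcases eq_or_lt_of_le (mem_Iic.mp ht) with rfl | hlt
  · -- t = 1 : tendsto ⊤
    refine ContinuousWithinAt.mono ?_ (subset_refl _)
    unfold ContinuousWithinAt
    rw [tdRad_one, EReal.tendsto_nhds_top_iff_real]
    intro x
    set δ : ℝ := (2 + |x|)⁻¹ with hδdef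
    have hδpos : 0 < δ := by positivity
    have hδ1 : (2 + |x|) * δ = 1 := by
      rw [hδdef]; field_simp
    have h1 : Ioo (1 - δ) (1 + δ) ∈ 𝓝 (1:ℝ) :=
      Ioo_mem_nhds (by linarith) (by linarith)
    filter_upwards [mem_nhdsWithin_of_mem_nhds h1, self_mem_nhdsWithin]
      with t ht1 ht2
    rcases eq_or_lt_of_le (mem_Iic.mp ht2) with rfl | hlt
    · rw [tdRad_one]; exact EReal.coe_lt_top x
    · rw [tdRad_of_ne hlt.ne, EReal.coe_lt_coe_iff]
      have h2 : 0 < 1 - t := by linarith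
      have h3 : 1 - t < δ := by
        have := ht1.1; linarith
      rw [lt_div_iff₀ h2]
      nlinarith [le_abs_self x, abs_nonneg x,
        mul_le_mul_of_nonneg_right (le_abs_self x) h2.le,
        mul_le_mul_of_nonneg_left h3.le (abs_nonneg x)]
  · -- t < 1
    apply ContinuousAt.continuousWithinAt
    have hev : ∀ᶠ s in 𝓝 t, tdRad s = ((s / (1 - s) : ℝ) : EReal) := by
      filter_upwards [isOpen_ne.mem_nhds (hlt.ne : t ≠ 1)] with s hs
      exact tdRad_of_ne hs
    have hca : ContinuousAt (fun s : ℝ => ((s / (1 - s) : ℝ) : EReal)) t :=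
      continuous_coe_real_ereal.continuousAt.comp
        (continuousAt_id.div (continuousAt_const.sub continuousAt_id)
          (sub_ne_zero.mpr (Ne.symm hlt.ne)))
    exact hca.congr (hev.mono fun s hs => hs.symm)

lemma tdEquiv_inl (expH : F ≃ₜ H) (x : H) :
    ((tdEquiv expH (Sum.inl x)) : F) = (1 + ‖expH.symm x‖)⁻¹ • expH.symm x := rfl

lemma tdEquiv_inr (expH : F ≃ₜ H) (s : ↥(sphere (0:F) 1)) :
    ((tdEquiv expH (Sum.inr s)) : F) = s := rfl

lemma tdRad_collapse (w : F) : tdRad ‖(1 + ‖w‖)⁻¹ • w‖ = (‖w‖ : EReal) := by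
  have h : (0:ℝ) < 1 + ‖w‖ := by positivity
  have hne : ‖w‖ / (1 + ‖w‖) ≠ 1 :=
    ne_of_lt ((div_lt_one h).mpr (by linarith [norm_nonneg w]))
  rw [td_aux1, tdRad_of_ne hne]
  norm_cast
  rw [show 1 - ‖w‖ / (1 + ‖w‖) = (1 + ‖w‖)⁻¹ by field_simp; ring]
  field_simp

theorem td_eq_induced (x₀ : H) (expH : F ≃ₜ H) (hzero : expH 0 = x₀)
    (hdist : ∀ v : F, dist x₀ (expH v) = ‖v‖)
    (p : {x : H // x ≠ x₀} → ↥(sphere (0:F) 1) × ℝ)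
    (hp₁ : ∀ x : {x : H // x ≠ x₀},
      ((p x).1 : F) = ‖expH.symm x.1‖⁻¹ • expH.symm x.1)
    (hp₂ : ∀ x : {x : H // x ≠ x₀}, (p x).2 = dist x₀ x.1) :
    pointedTeardropTop x₀ p =
      TopologicalSpace.induced (tdEquiv expH) inferInstance := by
  have hsymm0 : ∀ x : H, expH.symm x = 0 ↔ x = x₀ := fun x => by
    rw [show (0:F) = expH.symm x₀ by rw [← hzero, Homeomorph.symm_apply_apply]]
    exact ⟨fun h => expH.symm.injective h, fun h => by rw [h]⟩
  have hpt : ∀ x : {x : H // x ≠ x₀}, (p x).2 = ‖expH.symm x.1‖ := fun x => by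
    rw [hp₂, ← hdist (expH.symm x.1), Homeomorph.apply_symm_apply]
  apply le_antisymm
  · -- τ ≤ induced : every induced-open set is τ-open
    rw [TopologicalSpace.le_def]
    intro s hs
    rw [isOpen_induced_iff] at hs
    obtain ⟨O, hO, rfl⟩ := hs
    letI : TopologicalSpace (H ⊕ ↥(sphere (0:F) 1)) := pointedTeardropTop x₀ p
    show IsOpen _
    rw [isOpen_iff_forall_mem_open]
    rintro (x | s) hz
    · -- interior points
      have hcont : Continuous fun x : H => tdEquiv expH (Sum.inl x) := by
        apply Continuous.subtype_mk
        exact ((continuous_const.add expH.continuous_symm.norm).inv₀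
          (fun y => (by positivity : (0:ℝ) < 1 + ‖expH.symm y‖).ne')).smul expH.continuous_symm
      refine ⟨Sum.inl '' ((fun x : H => tdEquiv expH (Sum.inl x)) ⁻¹' O),
        ?_, ?_, ⟨x, hz, rfl⟩⟩
      · rintro _ ⟨x', hx', rfl⟩; exact hx'
      · exact TopologicalSpace.isOpen_generateFrom_of_mem
          (Or.inl ⟨_, hO.preimage hcont, rfl⟩)
    · -- boundary points
      obtain ⟨ε, hε, hball⟩ := Metric.isOpen_iff.mp hO _ hz
      refine ⟨{w : H ⊕ ↥(sphere (0:F) 1) | Sum.elim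
          (fun x => ∃ hx : x ≠ x₀,
            ((p ⟨x, hx⟩).1, ((p ⟨x, hx⟩).2 : EReal)) ∈
              ball s (ε/2) ×ˢ Ioi ((2/ε : ℝ) : EReal))
          (fun u => ((u, ⊤) : _ × EReal) ∈
              ball s (ε/2) ×ˢ Ioi ((2/ε : ℝ) : EReal)) w}, ?_, ?_, ?_⟩
      · rintro (x | u) hm
        · simp only [Set.mem_setOf_eq, Sum.elim_inl] at hm
          obtain ⟨hx, hm1, hm2⟩ := hm
          rw [Set.mem_preimage]
          apply hball
          rw [mem_ball, Subtype.dist_eq, tdEquiv_inl, tdEquiv_inr]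
          set w : F := expH.symm x with hw
          set t : ℝ := ‖w‖ with ht
          have hw0 : w ≠ 0 := fun hc => hx ((hsymm0 x).mp hc)
          have ht0 : 0 < t := norm_pos_iff.mpr hw0
          have hM : 2/ε < t := by
            have h2 : ((2/ε : ℝ) : EReal) < (((p ⟨x, hx⟩).2 : ℝ) : EReal) := hm2
            rw [EReal.coe_lt_coe_iff] at h2
            exact lt_of_lt_of_eq h2 (hpt ⟨x, hx⟩)
          set u : ↥(sphere (0:F) 1) := (p ⟨x, hx⟩).1 with hu
          have huval : (u : F) = t⁻¹ • w := by rw [hu, hp₁]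
          have hkey : (1 + t)⁻¹ • w = (t/(1+t)) • (u : F) := by
            rw [huval, smul_smul]
            congr 1
            field_simp
          calc dist ((1 + t)⁻¹ • w) (s : F)
              ≤ dist ((1 + t)⁻¹ • w) (u : F) + dist (u : F) (s : F) :=
                dist_triangle _ _ _
            _ < ε/2 + ε/2 := by
                apply add_lt_add
                · have h1t : (0:ℝ) < 1 + t := by linarith
                  have hd : dist ((1 + t)⁻¹ • w) (u : F) = 1/(1+t) := by
                    rw [hkey, dist_eq_norm,
                      show (t/(1+t)) • (u:F) - (u:F) = (t/(1+t) - 1) • (u:F) by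
                        rw [sub_smul, one_smul],
                      norm_smul, Real.norm_eq_abs,
                      mem_sphere_zero_iff_norm.mp u.2, mul_one,
                      abs_of_nonpos (by
                        rw [sub_nonpos, div_le_one h1t]; linarith)]
                    field_simp
                    ring
                  rw [hd]
                  have hεt : 2 < t * ε := (div_lt_iff₀ hε).mp hM
                  rw [div_lt_div_iff₀ h1t (by norm_num : (0:ℝ) < 2)]
                  nlinarith
                · rw [← Subtype.dist_eq]
                  exact mem_ball.mp hm1
            _ = ε := by ring
        · simp only [Set.mem_setOf_eq, Sum.elim_inr] at hm
          rw [Set.mem_preimage]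
          apply hball
          rw [mem_ball, Subtype.dist_eq, tdEquiv_inr, tdEquiv_inr, ← Subtype.dist_eq]
          have := mem_ball.mp hm.1
          linarith
      · exact TopologicalSpace.isOpen_generateFrom_of_mem
          (Or.inr ⟨_, (isOpen_ball.prod isOpen_Ioi), rfl⟩)
      · simp only [Set.mem_setOf_eq, Sum.elim_inr]
        exact ⟨mem_ball_self (by positivity), EReal.coe_lt_top _⟩
  · -- induced ≤ τ : each generator is induced-open
    apply le_generateFrom
    rintro T (⟨U, hU, rfl⟩ | ⟨V, hV, rfl⟩)
    · rw [isOpen_induced_iff]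
      refine ⟨{v : ↥(closedBall (0:F) 1) | ‖(v:F)‖ < 1} ∩
        (fun v : ↥(closedBall (0:F) 1) => expH ((1 - ‖(v:F)‖)⁻¹ • (v:F))) ⁻¹' U,
        ?_, ?_⟩
      · apply ContinuousOn.isOpen_inter_preimage ?_ ?_ hU
        · apply expH.continuous.comp_continuousOn
          apply ContinuousOn.smul
          · apply ContinuousOn.inv₀
            · exact (continuous_const.sub continuous_subtype_val.norm).continuousOn
            · intro v hv
              have hv' : ‖(v:F)‖ < 1 := hv
              exact sub_ne_zero.mpr hv'.ne'
          · exact continuous_subtype_val.continuousOn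
        · have : {v : ↥(closedBall (0:F) 1) | ‖(v:F)‖ < 1} =
              (Subtype.val) ⁻¹' (ball (0:F) 1) := by
            ext v; simp [mem_ball_zero_iff]
          rw [this]
          exact isOpen_ball.preimage continuous_subtype_val
      · ext z
        rcases z with x | s
        · simp only [Set.mem_preimage, Set.mem_inter_iff, Set.mem_setOf_eq,
            tdEquiv_inl]
          constructor
          · rintro ⟨-, hm⟩
            refine ⟨x, ?_, rfl⟩
            rwa [td_aux2, Homeomorph.apply_symm_apply] at hm
          · rintro ⟨x', hx', hxx⟩
            rw [Sum.inl.injEq] at hxx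
            subst hxx
            refine ⟨td_aux1' _, ?_⟩
            rwa [td_aux2, Homeomorph.apply_symm_apply]
        · simp only [Set.mem_preimage, Set.mem_inter_iff, Set.mem_setOf_eq,
            tdEquiv_inr]
          constructor
          · rintro ⟨h1, -⟩
            exact absurd (mem_sphere_zero_iff_norm.mp s.2) h1.ne
          · rintro ⟨x', hx', hxx⟩
            exact absurd hxx (by simp)
    · obtain ⟨W, hW, hWV⟩ :=
        (IsInducing.subtypeVal.prodMap IsInducing.id).isOpen_iff.mp hV
      rw [isOpen_induced_iff]
      refine ⟨{v : ↥(closedBall (0:F) 1) | (v:F) ≠ 0} ∩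
        (fun v : ↥(closedBall (0:F) 1) =>
          ((‖(v:F)‖⁻¹ • (v:F), tdRad ‖(v:F)‖) : F × EReal)) ⁻¹' W, ?_, ?_⟩
      · apply ContinuousOn.isOpen_inter_preimage ?_ ?_ hW
        · apply ContinuousOn.prodMk
          · exact (continuous_subtype_val.norm.continuousOn.inv₀
              (fun v hv => norm_ne_zero_iff.mpr hv)).smul
              continuous_subtype_val.continuousOn
          · exact tdRad_continuousOn.comp
              continuous_subtype_val.norm.continuousOn
              (fun v _ => mem_Iic.mpr (mem_closedBall_zero_iff.mp v.2))
        · exact isOpen_ne.preimage continuous_subtype_val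
      · ext z
        rcases z with x | s
        · simp only [Set.mem_preimage, Set.mem_inter_iff, Set.mem_setOf_eq,
            tdEquiv_inl, Sum.elim_inl]
          constructor
          · rintro ⟨hv0, hmW⟩
            have hw0 : expH.symm x ≠ 0 := by
              intro hc; apply hv0; rw [hc, smul_zero]
            have hx : x ≠ x₀ := fun hc => hw0 ((hsymm0 x).mpr hc)
            refine ⟨hx, ?_⟩
            rw [← hWV, Set.mem_preimage]
            show ((((p ⟨x, hx⟩).1 : F), (((p ⟨x, hx⟩).2 : ℝ) : EReal)) ∈ W)
            have e1 : ((p ⟨x, hx⟩).1 : F) =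
                ‖(1 + ‖expH.symm x‖)⁻¹ • expH.symm x‖⁻¹ •
                  ((1 + ‖expH.symm x‖)⁻¹ • expH.symm x) := by
              rw [td_aux4 _ hw0]; exact hp₁ ⟨x, hx⟩
            have e2 : (((p ⟨x, hx⟩).2 : ℝ) : EReal) =
                tdRad ‖(1 + ‖expH.symm x‖)⁻¹ • expH.symm x‖ := by
              rw [tdRad_collapse]
              exact congrArg Real.toEReal (hpt ⟨x, hx⟩)
            rw [e1, e2]; exact hmW
          · rintro ⟨hx, hmV⟩
            have hw0 : expH.symm x ≠ 0 := fun hc => hx ((hsymm0 x).mp hc)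
            rw [← hWV, Set.mem_preimage] at hmV
            have hmW : ((((p ⟨x, hx⟩).1 : F), (((p ⟨x, hx⟩).2 : ℝ) : EReal)) ∈ W) := hmV
            have e1 : ((p ⟨x, hx⟩).1 : F) =
                ‖(1 + ‖expH.symm x‖)⁻¹ • expH.symm x‖⁻¹ •
                  ((1 + ‖expH.symm x‖)⁻¹ • expH.symm x) := by
              rw [td_aux4 _ hw0]; exact hp₁ ⟨x, hx⟩
            have e2 : (((p ⟨x, hx⟩).2 : ℝ) : EReal) =
                tdRad ‖(1 + ‖expH.symm x‖)⁻¹ • expH.symm x‖ := by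
              rw [tdRad_collapse]
              exact congrArg Real.toEReal (hpt ⟨x, hx⟩)
            rw [e1, e2] at hmW
            refine ⟨?_, hmW⟩
            have hnn : ‖(1 + ‖expH.symm x‖)⁻¹ • expH.symm x‖ ≠ 0 := by
              rw [td_aux1]
              have h0 : 0 < ‖expH.symm x‖ := norm_pos_iff.mpr hw0
              positivity
            exact norm_ne_zero_iff.mp hnn
        · simp only [Set.mem_preimage, Set.mem_inter_iff, Set.mem_setOf_eq,
            tdEquiv_inr, Sum.elim_inr]
          have hs1 : ‖(s:F)‖ = 1 := mem_sphere_zero_iff_norm.mp s.2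
          have hs0 : (s:F) ≠ 0 := fun hc => by simp [hc] at hs1
          rw [hs1, tdRad_one, inv_one, one_smul, ← hWV, Set.mem_preimage]
          exact ⟨fun h => h.2, fun h => ⟨hs0, h⟩⟩

end TeardropAux

/-- Example 3.3 (Hadamard's teardrop): let `H` be an `n`-dimensional Hadamard
manifold with base point `x₀` and `S` the unit (tangent) sphere at `x₀`.  By
the Cartan–Hadamard theorem the exponential map at `x₀` is a homeomorphism
`exp : ℝⁿ → H` with `d(x₀, exp v) = ‖v‖`.  The map
`p : H \ {x₀} → S × (0, +∞)`, `p(x) = (γ'_x(0), d(x₀, x))` — i.e. the pair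
(unit radial direction of `x`, distance to `x₀`) — is continuous, and the
teardrop `H ∪_p S` is homeomorphic to the closed unit ball in the tangent
space; in particular it is an `n`-cell. -/
theorem hadamard_teardrop_is_cell
    {n : ℕ} {H : Type*} [MetricSpace H] (x₀ : H)
    (expH : EuclideanSpace ℝ (Fin n) ≃ₜ H)
    (hzero : expH 0 = x₀)
    (hdist : ∀ v : EuclideanSpace ℝ (Fin n), dist x₀ (expH v) = ‖v‖)
    (p : {x : H // x ≠ x₀} →
      ↥(Metric.sphere (0 : EuclideanSpace ℝ (Fin n)) 1) × ℝ)
    (hp₁ : ∀ x : {x : H // x ≠ x₀},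
      ((p x).1 : EuclideanSpace ℝ (Fin n)) =
        ‖expH.symm x.1‖⁻¹ • expH.symm x.1)
    (hp₂ : ∀ x : {x : H // x ≠ x₀}, (p x).2 = dist x₀ x.1) :
    Continuous p ∧
      Nonempty
        (@Homeomorph (H ⊕ ↥(Metric.sphere (0 : EuclideanSpace ℝ (Fin n)) 1))
          ↥(Metric.closedBall (0 : EuclideanSpace ℝ (Fin n)) 1)
          (pointedTeardropTop x₀ p) _) := by
  constructor
  · have hne : ∀ x : {x : H // x ≠ x₀}, expH.symm x.1 ≠ 0 := by
      intro x hc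
      apply x.2
      have h := congrArg expH hc
      rwa [Homeomorph.apply_symm_apply, hzero] at h
    have h1 : Continuous fun x : {x : H // x ≠ x₀} => (p x).1 := by
      apply continuous_induced_rng.mpr
      show Continuous fun x : {x : H // x ≠ x₀} =>
        ((p x).1 : EuclideanSpace ℝ (Fin n))
      have he : (fun x : {x : H // x ≠ x₀} =>
          ((p x).1 : EuclideanSpace ℝ (Fin n))) =
          fun x => ‖expH.symm x.1‖⁻¹ • expH.symm x.1 := funext hp₁
      rw [he]
      exact ((expH.continuous_symm.comp continuous_subtype_val).norm.inv₀
        (fun x => norm_ne_zero_iff.mpr (hne x))).smul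
        (expH.continuous_symm.comp continuous_subtype_val)
    have h2 : Continuous fun x : {x : H // x ≠ x₀} => (p x).2 := by
      have he : (fun x : {x : H // x ≠ x₀} => (p x).2) =
          fun x => dist x₀ x.1 := funext hp₂
      rw [he]
      exact continuous_const.dist continuous_subtype_val
    exact h1.prodMk h2
  · have hind : @Topology.IsInducing _ _ (pointedTeardropTop x₀ p) _
        (tdEquiv expH) :=
      @Topology.IsInducing.mk _ _ (pointedTeardropTop x₀ p) _ _
        (td_eq_induced x₀ expH hzero hdist p hp₁ hp₂)
    exact ⟨@Equiv.toHomeomorphOfIsInducing _ _ (pointedTeardropTop x₀ p) _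
      (tdEquiv expH) hind⟩
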